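/- Let k be a positive integer and let n be an integer with |n| ≥ 2. Then |∫_{−k}^{k} ∫_{2nk−k}^{2nk+k} cos(π(x−y))/(8·(x−y)) dy dx| ≤ ∫_{−k}^{k} ∫_{2nk−k}^{2nk+k} 1/(4π·(x−y)²) dy dx. -/

import Mathlib

open MeasureTheory Filter

private lemma deriv_inv_lin (c x y : ℝ) (hc : c ≠ 0) (h : x - y ≠ 0) :
    HasDerivAt (fun y : ℝ => 1 / (c * (x - y))) (1 / (c * (x - y) ^ 2)) y := by
  have hv : HasDerivAt (fun y : ℝ => c * (x - y)) (-c) y := by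
    have := ((hasDerivAt_id y).const_sub x).const_mul c
    simpa using this
  have hne : c * (x - y) ≠ 0 := mul_ne_zero hc h
  have := (hasDerivAt_const y (1:ℝ)).div hv hne
  refine this.congr_deriv ?_
  field_simp
  ring

private lemma deriv_F (x y : ℝ) (h : x - y ≠ 0) :
    HasDerivAt (fun y : ℝ => -Real.sin (Real.pi * (x - y)) / (8 * Real.pi * (x - y)))
      (Real.cos (Real.pi * (x - y)) / (8 * (x - y))
        - Real.sin (Real.pi * (x - y)) / (8 * Real.pi * (x - y) ^ 2)) y := by
  have hπ : Real.pi ≠ 0 := Real.pi_ne_zero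
  have hlin : HasDerivAt (fun y : ℝ => Real.pi * (x - y)) (-Real.pi) y := by
    have := ((hasDerivAt_id y).const_sub x).const_mul Real.pi
    simpa using this
  have hu : HasDerivAt (fun y : ℝ => -Real.sin (Real.pi * (x - y)))
      (Real.pi * Real.cos (Real.pi * (x - y))) y := by
    have := ((Real.hasDerivAt_sin (Real.pi * (x - y))).comp y hlin).neg
    refine this.congr_deriv ?_
    ring
  have hv : HasDerivAt (fun y : ℝ => 8 * Real.pi * (x - y)) (-(8 * Real.pi)) y := by
    have := ((hasDerivAt_id y).const_sub x).const_mul (8 * Real.pi)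
    simpa using this
  have hne : 8 * Real.pi * (x - y) ≠ 0 := by
    apply mul_ne_zero (by positivity) h
  have := hu.div hv hne
  refine this.congr_deriv ?_
  field_simp

private lemma integral_inv_sq (c x a b : ℝ) (hc : c ≠ 0)
    (h : ∀ y ∈ Set.uIcc a b, x - y ≠ 0) :
    ∫ y in a..b, 1 / (c * (x - y) ^ 2) = 1 / (c * (x - b)) - 1 / (c * (x - a)) := by
  apply intervalIntegral.integral_eq_sub_of_hasDerivAt
  · intro y hy
    exact deriv_inv_lin c x y hc (h y hy)
  · apply ContinuousOn.intervalIntegrable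
    apply ContinuousOn.div continuousOn_const (by fun_prop)
    intro y hy
    exact mul_ne_zero hc (pow_ne_zero 2 (h y hy))

private lemma pointwise_bound (k : ℕ) (a b x : ℝ) (hb : b = a + 2 * k)
    (hne : ∀ y ∈ Set.uIcc a b, x - y ≠ 0) :
    |∫ y in a..b, Real.cos (Real.pi * (x - y)) / (8 * (x - y))| ≤
      ∫ y in a..b, 1 / (4 * Real.pi * (x - y) ^ 2) := by
  have hπ : (0:ℝ) < Real.pi := Real.pi_pos
  have hab : a ≤ b := by
    rw [hb]; nlinarith [Nat.cast_nonneg (α := ℝ) k]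
  have hxa : x - a ≠ 0 := hne a (by simp [Set.uIcc_of_le hab, hab])
  have hxb : x - b ≠ 0 := hne b (by simp [Set.uIcc_of_le hab, hab])
  -- continuity facts
  have hc1 : ContinuousOn (fun y => Real.cos (Real.pi * (x - y)) / (8 * (x - y)))
      (Set.uIcc a b) := by
    apply ContinuousOn.div (by fun_prop) (by fun_prop)
    intro y hy
    exact mul_ne_zero (by norm_num) (hne y hy)
  have hc2 : ContinuousOn (fun y => Real.sin (Real.pi * (x - y)) / (8 * Real.pi * (x - y) ^ 2))
      (Set.uIcc a b) := by
    apply ContinuousOn.div (by fun_prop) (by fun_prop)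
    intro y hy
    exact mul_ne_zero (by positivity) (pow_ne_zero 2 (hne y hy))
  have hc3 : ContinuousOn (fun y => 1 / (8 * Real.pi * (x - y) ^ 2)) (Set.uIcc a b) := by
    apply ContinuousOn.div continuousOn_const (by fun_prop)
    intro y hy
    exact mul_ne_zero (by positivity) (pow_ne_zero 2 (hne y hy))
  have hI1 := hc1.intervalIntegrable (μ := volume)
  have hI2 := hc2.intervalIntegrable (μ := volume)
  have hI3 := hc3.intervalIntegrable (μ := volume)
  -- FTC for the combination
  have hftc : ∫ y in a..b,
      (Real.cos (Real.pi * (x - y)) / (8 * (x - y))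
        - Real.sin (Real.pi * (x - y)) / (8 * Real.pi * (x - y) ^ 2))
      = (-Real.sin (Real.pi * (x - b)) / (8 * Real.pi * (x - b)))
        - (-Real.sin (Real.pi * (x - a)) / (8 * Real.pi * (x - a))) := by
    apply intervalIntegral.integral_eq_sub_of_hasDerivAt
    · intro y hy
      exact deriv_F x y (hne y hy)
    · exact (hc1.sub hc2).intervalIntegrable
  rw [intervalIntegral.integral_sub hI1 hI2] at hftc
  -- sin periodicity: sin (π (x - b)) = sin (π (x - a))
  have hsin : Real.sin (Real.pi * (x - b)) = Real.sin (Real.pi * (x - a)) := by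
    have harg : Real.pi * (x - b) = Real.pi * (x - a) + ((-(k:ℤ):ℤ):ℝ) * (2 * Real.pi) := by
      rw [hb]; push_cast; ring
    rw [harg, Real.sin_add_int_mul_two_pi]
  set s := Real.sin (Real.pi * (x - a)) with hs
  set D := ∫ y in a..b, 1 / (8 * Real.pi * (x - y) ^ 2) with hD
  have hDval : D = 1 / (8 * Real.pi * (x - b)) - 1 / (8 * Real.pi * (x - a)) :=
    integral_inv_sq _ x a b (by positivity) hne
  have hDnonneg : 0 ≤ D := by
    apply intervalIntegral.integral_nonneg hab
    intro u hu
    positivity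
  -- boundary term bound
  have hbd : |(-Real.sin (Real.pi * (x - b)) / (8 * Real.pi * (x - b)))
      - (-Real.sin (Real.pi * (x - a)) / (8 * Real.pi * (x - a)))| ≤ D := by
    have heq : (-Real.sin (Real.pi * (x - b)) / (8 * Real.pi * (x - b)))
        - (-Real.sin (Real.pi * (x - a)) / (8 * Real.pi * (x - a))) = -(s * D) := by
      rw [hsin, hDval]; ring
    rw [heq, abs_neg, abs_mul]
    calc |s| * |D| ≤ 1 * |D| := by
          apply mul_le_mul_of_nonneg_right (Real.abs_sin_le_one _) (abs_nonneg _)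
      _ = D := by rw [one_mul, abs_of_nonneg hDnonneg]
  -- oscillatory remainder bound
  have hrem : |∫ y in a..b, Real.sin (Real.pi * (x - y)) / (8 * Real.pi * (x - y) ^ 2)| ≤ D := by
    refine le_trans (intervalIntegral.abs_integral_le_integral_abs hab) ?_
    apply intervalIntegral.integral_mono_on hab hI2.abs hI3
    intro y hy
    have hy' : x - y ≠ 0 := hne y (by rw [Set.uIcc_of_le hab]; exact hy)
    have hpos : 0 < 8 * Real.pi * (x - y) ^ 2 := by positivity
    rw [abs_div, abs_of_pos hpos]
    gcongr
    exact Real.abs_sin_le_one _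
  have h2D : (∫ y in a..b, 1 / (4 * Real.pi * (x - y) ^ 2)) = 2 * D := by
    rw [integral_inv_sq (4 * Real.pi) x a b (by positivity) hne, hDval]
    field_simp
    ring
  have hsplit : (∫ y in a..b, Real.cos (Real.pi * (x - y)) / (8 * (x - y)))
      = ((-Real.sin (Real.pi * (x - b)) / (8 * Real.pi * (x - b)))
        - (-Real.sin (Real.pi * (x - a)) / (8 * Real.pi * (x - a))))
        + ∫ y in a..b, Real.sin (Real.pi * (x - y)) / (8 * Real.pi * (x - y) ^ 2) := by
    linarith [hftc]
  rw [h2D, hsplit]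
  exact (abs_add_le _ _).trans (by linarith)

theorem stmt_17 (k : ℕ) (hk : 0 < k) (n : ℤ) (hn : 2 ≤ |n|) :
    |∫ x in (-(k:ℝ))..(k:ℝ), ∫ y in (2*(n:ℝ)*(k:ℝ) - (k:ℝ))..(2*(n:ℝ)*(k:ℝ) + (k:ℝ)),
        Real.cos (Real.pi * (x - y)) / (8 * (x - y))| ≤
      ∫ x in (-(k:ℝ))..(k:ℝ), ∫ y in (2*(n:ℝ)*(k:ℝ) - (k:ℝ))..(2*(n:ℝ)*(k:ℝ) + (k:ℝ)),
        1 / (4 * Real.pi * (x - y) ^ 2) := by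
  have hπ : (0:ℝ) < Real.pi := Real.pi_pos
  have hk1 : (1:ℝ) ≤ (k:ℝ) := by exact_mod_cast hk
  set a : ℝ := 2*(n:ℝ)*(k:ℝ) - (k:ℝ) with ha
  set b : ℝ := 2*(n:ℝ)*(k:ℝ) + (k:ℝ) with hbdef
  have hb : b = a + 2 * (k:ℕ) := by rw [ha, hbdef]; ring
  have hab : a ≤ b := by rw [ha, hbdef]; linarith
  have hkk : -(k:ℝ) ≤ (k:ℝ) := by linarith
  have hne : ∀ x ∈ Set.Icc (-(k:ℝ)) (k:ℝ), ∀ y ∈ Set.uIcc a b, x - y ≠ 0 := by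
    intro x hx y hy
    rw [Set.uIcc_of_le hab] at hy
    rcases le_abs.mp hn with h2 | h2
    · have hn2 : (2:ℝ) ≤ (n:ℝ) := by exact_mod_cast h2
      have : x - y < 0 := by
        have h1 := hx.2
        have h3 := hy.1
        rw [ha] at h3
        nlinarith
      exact this.ne
    · have hn2 : (n:ℝ) ≤ -2 := by
        have : (2:ℝ) ≤ ((-n : ℤ) : ℝ) := by exact_mod_cast h2
        push_cast at this
        linarith
      have : 0 < x - y := by
        have h1 := hx.1
        have h3 := hy.2
        rw [hbdef] at h3
        nlinarith
      exact this.ne'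
  have hacc : ∀ x ∈ Set.uIcc (-(k:ℝ)) (k:ℝ), x - a ≠ 0 := fun x hx =>
    hne x (by rwa [Set.uIcc_of_le hkk] at hx) a (Set.left_mem_uIcc)
  have hbcc : ∀ x ∈ Set.uIcc (-(k:ℝ)) (k:ℝ), x - b ≠ 0 := fun x hx =>
    hne x (by rwa [Set.uIcc_of_le hkk] at hx) b (Set.right_mem_uIcc)
  have hRHScont : ContinuousOn
      (fun x => ∫ y in a..b, 1 / (4 * Real.pi * (x - y) ^ 2)) (Set.uIcc (-(k:ℝ)) (k:ℝ)) := by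
    apply ContinuousOn.congr (f := fun x => 1 / (4 * Real.pi * (x - b)) - 1 / (4 * Real.pi * (x - a)))
    · apply ContinuousOn.sub
      · apply ContinuousOn.div continuousOn_const (by fun_prop)
        intro x hx
        exact mul_ne_zero (by positivity) (hbcc x hx)
      · apply ContinuousOn.div continuousOn_const (by fun_prop)
        intro x hx
        exact mul_ne_zero (by positivity) (hacc x hx)
    · intro x hx
      exact integral_inv_sq (4 * Real.pi) x a b (by positivity)
        (hne x (by rwa [Set.uIcc_of_le hkk] at hx))
  have hIRHS := hRHScont.intervalIntegrable (μ := volume)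
  rw [← Real.norm_eq_abs]
  refine (intervalIntegral.norm_integral_le_abs_of_norm_le ?_ hIRHS).trans_eq ?_
  · filter_upwards [ae_restrict_mem measurableSet_uIoc] with x hx
    rw [Real.norm_eq_abs]
    have hx' : x ∈ Set.Icc (-(k:ℝ)) (k:ℝ) := by
      rw [Set.uIoc_of_le hkk] at hx
      exact Set.Ioc_subset_Icc_self hx
    exact pointwise_bound k a b x hb (hne x hx')
  · apply abs_of_nonneg
    apply intervalIntegral.integral_nonneg hkk
    intro x hx
    apply intervalIntegral.integral_nonneg hab
    intro y hy
    positivity
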